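/- Let X be a compact Hausdorff space. Suppose that for every compact Hausdorff space Y admitting a continuous surjection from X, if Y has a topological basis of cardinality at most 2^ℵ₀ (the continuum), then Y is a Fréchet–Urysohn space. Then X itself is a Fréchet–Urysohn space. -/

import Mathlib

open Cardinal Set Filter Topology TopologicalSpace

universe u

/-- In a compact space, a sequence all of whose cluster points equal `x` tends to `x`. -/
lemma my_tendsto_of_clusterPt {X : Type u} [TopologicalSpace X] [CompactSpace X]
    {t : ℕ → X} {x : X} (h : ∀ z, MapClusterPt z atTop t → z = x) :
    Tendsto t atTop (𝓝 x) := by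
  rw [tendsto_nhds]
  by_contra hc
  push_neg at hc
  obtain ⟨U, hUo, hxU, hfreq⟩ := hc
  have hfr : ∃ᶠ n in atTop, t n ∈ Uᶜ :=
    Filter.not_eventually.mp (fun hev => hfreq hev)
  rw [Filter.frequently_iff_neBot] at hfr
  have hle : Filter.map t (atTop ⊓ 𝓟 {n | t n ∈ Uᶜ}) ≤ Filter.map t atTop ⊓ 𝓟 Uᶜ := by
    refine le_inf (Filter.map_mono inf_le_left) ?_
    refine le_trans (Filter.map_mono inf_le_right) ?_
    simp only [Filter.map_principal, Filter.le_principal_iff, Filter.mem_principal]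
    exact Set.image_preimage_subset t Uᶜ
  have hne : (Filter.map t atTop ⊓ 𝓟 Uᶜ).NeBot := Filter.NeBot.mono (hfr.map t) hle
  obtain ⟨z, hz⟩ := exists_clusterPt_of_compactSpace (Filter.map t atTop ⊓ 𝓟 Uᶜ)
  have hzx : z = x := h z (hz.mono inf_le_left)
  have hzc : z ∈ closure Uᶜ :=
    mem_closure_iff_clusterPt.2 ((hz.mono inf_le_right).mono le_rfl)
  rw [hUo.isClosed_compl.closure_eq] at hzc
  exact hzc (hzx ▸ hxU)

/-- A continuous function maps cluster points of a sequence to cluster points; if the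
composed sequence converges, the value at the cluster point is the limit. -/
lemma my_clusterPt_eq_limit {X : Type u} {Y : Type*} [TopologicalSpace X] [TopologicalSpace Y]
    [T2Space Y] {t : ℕ → X} {z : X} (hz : MapClusterPt z atTop t)
    {f : X → Y} (hf : Continuous f) {c : Y}
    (hc : Tendsto (fun n => f (t n)) atTop (𝓝 c)) : f z = c := by
  have h1 : MapClusterPt (f z) atTop (f ∘ t) := hz.continuousAt_comp hf.continuousAt
  have h2 : (𝓝 (f z) ⊓ Filter.map (f ∘ t) atTop).NeBot := h1
  have h3 : Filter.map (f ∘ t) atTop ≤ 𝓝 c := hc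
  exact eq_of_nhds_neBot (h2.mono (inf_le_inf le_rfl h3))

/-- Existence of cluster points of sequences in a compact space. -/
lemma my_exists_clusterPt {X : Type u} [TopologicalSpace X] [CompactSpace X] (t : ℕ → X) :
    ∃ z, MapClusterPt z atTop t :=
  exists_clusterPt_of_compactSpace (Filter.map t atTop)

lemma my_clusterPt_mem_closure {X : Type u} [TopologicalSpace X] {t : ℕ → X} {z : X}
    (hz : MapClusterPt z atTop t) {C : Set X} (hC : ∀ n, t n ∈ C) : z ∈ closure C := by
  refine mem_closure_iff_clusterPt.2 (hz.clusterPt.mono ?_)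
  rw [Filter.le_principal_iff]
  exact Filter.mem_map.2 (Filter.Eventually.of_forall hC)

/-- A product of `≤ 𝔠` copies of `ℝ` has a topological basis of cardinality `≤ 𝔠`. -/
lemma my_exists_basis_pi (ι : Type u) (hι : #ι ≤ 𝔠) :
    ∃ B : Set (Set (ι → ℝ)), IsTopologicalBasis B ∧ #B ≤ 𝔠 := by
  obtain ⟨T₀, hT₀c, -, hT₀⟩ := exists_countable_basis ℝ
  haveI : Countable ↥T₀ := hT₀c.to_subtype
  set φ : List (ι × ↥T₀) → Set (ι → ℝ) :=
    fun l => {g | ∀ p ∈ l, g p.1 ∈ (p.2 : Set ℝ)} with hφ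
  have hopen : ∀ l, IsOpen (φ l) := by
    intro l
    induction l with
    | nil => simpa [hφ] using isOpen_univ
    | cons hd tl ih =>
      have : φ (hd :: tl) = ((fun g : ι → ℝ => g hd.1) ⁻¹' (hd.2 : Set ℝ)) ∩ φ tl := by
        ext g
        simp only [hφ, Set.mem_setOf_eq, List.mem_cons, Set.mem_inter_iff, Set.mem_preimage]
        constructor
        · intro hg
          exact ⟨hg hd (Or.inl rfl), fun p hp => hg p (Or.inr hp)⟩
        · rintro ⟨h1, h2⟩ p (rfl | hp)
          · exact h1
          · exact h2 p hp
      rw [this]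
      exact (((hT₀.isOpen hd.2.2).preimage (continuous_apply hd.1))).inter ih
  refine ⟨Set.range φ, ?_, ?_⟩
  · refine isTopologicalBasis_of_isOpen_of_nhds (fun u hu => ?_) (fun a u hau hu => ?_)
    · obtain ⟨l, rfl⟩ := hu
      exact hopen l
    · obtain ⟨v, ⟨U, F, hUT, rfl⟩, hav, hvu⟩ :=
        (isTopologicalBasis_pi (fun _ : ι => hT₀)).exists_subset_of_mem_open hau hu
      refine ⟨φ (F.attach.toList.map fun i => (i.1, ⟨U i.1, hUT i.1 i.2⟩)), ⟨_, rfl⟩, ?_, ?_⟩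
      · intro p hp
        simp only [List.mem_map, Finset.mem_toList, Finset.mem_attach, true_and] at hp
        obtain ⟨i, -, rfl⟩ := hp
        exact hav i.1 i.2
      · intro g hg
        refine hvu fun i hi => ?_
        exact hg (i, ⟨U i, hUT i hi⟩)
          (List.mem_map.2 ⟨⟨i, hi⟩, Finset.mem_toList.2 (Finset.mem_attach _ _), rfl⟩)
  · refine (mk_range_le).trans ((mk_list_le_max _).trans ?_)
    have h1 : #(ι × ↥T₀) ≤ 𝔠 := by
      rw [mk_prod]
      calc Cardinal.lift.{0} #ι * Cardinal.lift.{u} #↥T₀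
          ≤ 𝔠 * 𝔠 := by
            refine mul_le_mul' ?_ ?_
            · rwa [Cardinal.lift_uzero]
            · exact (Cardinal.lift_le.2 (Cardinal.mk_le_aleph0)).trans
                (by rw [Cardinal.lift_aleph0]; exact aleph0_le_continuum)
        _ = 𝔠 := continuum_mul_self
    exact max_le aleph0_le_continuum h1

/-- Key lemma: given any `≤ 𝔠`-sized family of continuous real functions on `X` and
`x ∈ closure S`, there is a sequence in `S` whose images under every function of the
family converge to the images of `x`. -/
lemma my_key {X : Type u} [TopologicalSpace X] [CompactSpace X] [T2Space X]
    (h : ∀ (Y : Type u) [TopologicalSpace Y] [CompactSpace Y] [T2Space Y],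
      (∃ f : X → Y, Continuous f ∧ Function.Surjective f) →
      (∃ B : Set (Set Y), TopologicalSpace.IsTopologicalBasis B ∧ #B ≤ Cardinal.continuum) →
      FrechetUrysohnSpace Y)
    {ι : Type u} (A : ι → X → ℝ) (hA : ∀ i, Continuous (A i)) (hι : #ι ≤ 𝔠)
    {S : Set X} {x : X} (hx : x ∈ closure S) :
    ∃ t : ℕ → X, (∀ n, t n ∈ S) ∧
      ∀ i, Tendsto (fun n => A i (t n)) atTop (𝓝 (A i x)) := by
  set g : X → (ι → ℝ) := fun x i => A i x with hg
  have hgc : Continuous g := continuous_pi fun i => hA i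
  set Y := Set.range g with hY
  haveI : CompactSpace ↥Y := isCompact_iff_compactSpace.mp (isCompact_range hgc)
  set q : X → ↥Y := Set.rangeFactorization g with hq
  have hqc : Continuous q := hgc.subtype_mk _
  have hqs : Function.Surjective q := Set.rangeFactorization_surjective
  obtain ⟨B, hB, hBc⟩ := my_exists_basis_pi ι hι
  have hBsub : IsTopologicalBasis ((Set.preimage (Subtype.val : ↥Y → (ι → ℝ))) '' B) :=
    isTopologicalBasis_subtype hB _
  haveI hFU : FrechetUrysohnSpace ↥Y :=
    h ↥Y ⟨q, hqc, hqs⟩ ⟨_, hBsub, (mk_image_le).trans hBc⟩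
  have hqx : q x ∈ closure (q '' S) :=
    (image_closure_subset_closure_image hqc) ⟨x, hx, rfl⟩
  obtain ⟨u, hu, huc⟩ := mem_closure_iff_seq_limit.mp hqx
  choose t ht hqt using hu
  refine ⟨t, ht, fun i => ?_⟩
  have hev : Continuous (fun y : ↥Y => (y : ι → ℝ) i) :=
    (continuous_apply i).comp continuous_subtype_val
  have := (hev.continuousAt.tendsto.comp huc)
  have heq : (fun n => A i (t n)) = (fun y : ↥Y => (y : ι → ℝ) i) ∘ u := by
    funext n
    simp only [Function.comp_apply, ← hqt n]
    rfl
  rw [heq]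
  exact this

/-- Case 1: if `x` is in the closure of a countable set `C`, then some sequence of `C`
converges to `x`. -/
lemma my_case1 {X : Type u} [TopologicalSpace X] [CompactSpace X] [T2Space X]
    (h : ∀ (Y : Type u) [TopologicalSpace Y] [CompactSpace Y] [T2Space Y],
      (∃ f : X → Y, Continuous f ∧ Function.Surjective f) →
      (∃ B : Set (Set Y), TopologicalSpace.IsTopologicalBasis B ∧ #B ≤ Cardinal.continuum) →
      FrechetUrysohnSpace Y)
    {C : Set X} (hC : C.Countable) {x : X} (hx : x ∈ closure C) :
    ∃ t : ℕ → X, (∀ n, t n ∈ C) ∧ Tendsto t atTop (𝓝 x) := by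
  set Z : Set X := closure C with hZ
  have hZcl : IsClosed Z := isClosed_closure
  -- the functions on `Z` restricted from `C(Z, ℝ)`, extended to `X` by Tietze
  have hext : ∀ f : C(↥Z, ℝ), ∃ g : C(X, ℝ), g.restrict Z = f := fun f =>
    ContinuousMap.exists_restrict_eq hZcl f
  choose ext hextspec using hext
  -- cardinality of C(Z, ℝ) is at most continuum
  have hcard : #C(↥Z, ℝ) ≤ 𝔠 := by
    haveI : Countable ↥C := hC.to_subtype
    set ρ : C(↥Z, ℝ) → (↥C → ℝ) := fun f c => f ⟨c.1, subset_closure c.2⟩ with hρ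
    have hρinj : Function.Injective ρ := by
      intro f g hfg
      have hD : Dense {z : ↥Z | (z : X) ∈ C} := by
        intro z
        rw [closure_subtype]
        have himg : (Subtype.val '' {z : ↥Z | (z : X) ∈ C}) = C := by
          apply Set.Subset.antisymm
          · rintro _ ⟨w, hw, rfl⟩; exact hw
          · intro c hc; exact ⟨⟨c, subset_closure hc⟩, hc, rfl⟩
        rw [himg]
        exact z.2
      have : (f : ↥Z → ℝ) = g := by
        refine Continuous.ext_on hD f.continuous g.continuous ?_
        rintro ⟨z, hz⟩ hzC
        have := congrFun hfg ⟨z, hzC⟩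
        exact this
      exact ContinuousMap.ext fun z => congrFun this z
    calc #C(↥Z, ℝ) ≤ #(↥C → ℝ) := Cardinal.mk_le_of_injective hρinj
      _ = Cardinal.lift.{u} #ℝ ^ Cardinal.lift.{0} #↥C := Cardinal.mk_arrow _ _
      _ ≤ 𝔠 ^ (ℵ₀ : Cardinal.{u}) := by
          rw [Cardinal.mk_real, Cardinal.lift_continuum, Cardinal.lift_uzero]
          exact Cardinal.power_le_power_left continuum_ne_zero Cardinal.mk_le_aleph0
      _ = 𝔠 := continuum_power_aleph0
  -- apply the key lemma
  obtain ⟨t, ht, htc⟩ := my_key h (fun f : C(↥Z, ℝ) => ⇑(ext f))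
    (fun f => (ext f).continuous) hcard hx
  refine ⟨t, ht, ?_⟩
  have hxZ : x ∈ Z := hx
  refine my_tendsto_of_clusterPt fun z hclz => ?_
  have hzZ : z ∈ Z := my_clusterPt_mem_closure hclz ht
  by_contra hne
  -- separate z from x by Urysohn
  obtain ⟨F, hF0, hF1, -⟩ := exists_continuous_zero_one_of_isClosed
    (isClosed_singleton (x := z)) (isClosed_singleton (x := x))
    (by simpa [Set.disjoint_singleton] using hne)
  set i : C(↥Z, ℝ) := F.restrict Z with hi
  have hval : ext i z = ext i x := by
    have hlim := htc i
    exact my_clusterPt_eq_limit hclz (ext i).continuous hlim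
  have h1 : ext i z = F z := by
    simpa [hi] using ContinuousMap.congr_fun (hextspec i) ⟨z, hzZ⟩
  have h2 : ext i x = F x := by
    simpa [hi] using ContinuousMap.congr_fun (hextspec i) ⟨x, hxZ⟩
  rw [h1, h2] at hval
  rw [hF0 rfl, hF1 rfl] at hval
  simp at hval

abbrev myW : Type u := ((Cardinal.aleph 1 : Cardinal.{u}).ord).ToType

lemma myW_countable_Iio (b : myW.{u}) : (Set.Iio b).Countable := by
  have := Cardinal.mk_Iio_ord_toType b
  rwa [← Cardinal.countable_iff_lt_aleph_one] at this

lemma myW_bounded {D : Set myW.{u}} (hD : D.Countable) : ∃ b : myW.{u}, ∀ a ∈ D, a < b := by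
  haveI hwo : IsWellOrder myW.{u} (fun a b : myW.{u} => a < b) := isWellOrder_lt
  have h1 : #D < Ordinal.cof (@Ordinal.type myW.{u} (fun a b : myW.{u} => a < b) hwo) := by
    rw [Ordinal.type_toType, Cardinal.isRegular_aleph_one.cof_eq,
      ← Cardinal.countable_iff_lt_aleph_one]
    exact hD
  obtain ⟨b, hb⟩ : ∃ b : myW.{u}, ∀ a ∈ D, a < b := by
    by_contra hne
    push_neg at hne
    refine absurd (Order.cof_le (s := D) fun y => hne y) (not_le.2 ?_)
    rw [Ordinal.cof_toType, Cardinal.isRegular_aleph_one.cof_eq,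
      ← Cardinal.countable_iff_lt_aleph_one]
    exact hD
  exact ⟨b, hb⟩

instance myW_instNonempty : Nonempty myW.{u} := by
  rw [Ordinal.toType_nonempty_iff_ne_zero]
  intro h0
  have h1 := Cardinal.card_ord (Cardinal.aleph 1)
  rw [h0, Ordinal.card_zero] at h1
  exact absurd h1 ((zero_le : (0 : Cardinal) ≤ ℵ₀).trans_lt Cardinal.aleph0_lt_aleph_one).ne

lemma myW_card : #myW.{u} ≤ 𝔠 := by
  rw [Cardinal.mk_toType, Cardinal.card_ord]
  exact Cardinal.aleph_one_le_continuum

/-- Case 2 : if `x ∈ closure S` but `x` is not in the closure of any countable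
subset of `S`, we get a contradiction. -/
lemma my_case2 {X : Type u} [TopologicalSpace X] [CompactSpace X] [T2Space X]
    (h : ∀ (Y : Type u) [TopologicalSpace Y] [CompactSpace Y] [T2Space Y],
      (∃ f : X → Y, Continuous f ∧ Function.Surjective f) →
      (∃ B : Set (Set Y), TopologicalSpace.IsTopologicalBasis B ∧ #B ≤ Cardinal.continuum) →
      FrechetUrysohnSpace Y)
    {S : Set X} {x : X} (hx : x ∈ closure S)
    (hcc : ∀ C : Set X, C ⊆ S → C.Countable → x ∉ closure C) : False := by
  classical
  -- the data at each stage: a point `z`, a function `f`, a countable set `C`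
  set D := X × (X → ℝ) × Set X with hD
  set Spec : ∀ b : myW.{u}, (∀ a : myW.{u}, a < b → D) → D → Prop := fun b prev d =>
    (d.2.2 ⊆ S ∧ d.2.2.Countable ∧ d.1 ∈ closure d.2.2) ∧
    (Continuous d.2.1 ∧ d.2.1 x = 0 ∧ ∀ a (hab : a < b), d.2.1 (prev a hab).1 = 1) ∧
    (∀ a (hab : a < b), (prev a hab).2.1 d.1 = 0) with hSpec
  set step : ∀ b : myW.{u}, (∀ a : myW.{u}, a < b → D) → D := fun b prev =>
    if hp : ∃ d, Spec b prev d then hp.choose else (x, fun _ => 0, ∅) with hstep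
  set g : myW.{u} → D := IsWellFounded.fix (· < ·) step with hg
  have hgeq : ∀ b, g b = step b fun a _ => g a := fun b =>
    IsWellFounded.fix_eq (· < ·) step b
  -- every stage satisfies its spec
  have hspec : ∀ b : myW.{u}, Spec b (fun a _ => g a) (g b) := by
    intro b
    induction b using IsWellFounded.induction (r := (· < · : myW.{u} → myW.{u} → Prop)) with
    | _ b ih =>
    have hex : ∃ d, Spec b (fun a _ => g a) d := by
      -- union of earlier countable sets
      set Csm : Set X := ⋃ a ∈ Set.Iio b, (g a).2.2 with hCsm
      have hCsmc : Csm.Countable :=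
        (myW_countable_Iio b).biUnion fun a ha => ((ih a ha).1).2.1
      have hCsmS : Csm ⊆ S := by
        intro w hw
        obtain ⟨a, ha, hwa⟩ := Set.mem_iUnion₂.1 hw
        exact ((ih a ha).1).1 hwa
      have hxCsm : x ∉ closure Csm := hcc Csm hCsmS hCsmc
      -- the earlier points all lie in `closure Csm`
      set Zb : Set X := (fun a => (g a).1) '' Set.Iio b with hZb
      have hZbsub : Zb ⊆ closure Csm := by
        rintro _ ⟨a, ha, rfl⟩
        exact closure_mono (Set.subset_biUnion_of_mem ha) ((ih a ha).1).2.2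
      have hxZb : x ∉ closure Zb := fun hmem =>
        hxCsm (closure_minimal hZbsub isClosed_closure hmem)
      -- Urysohn function: `0` at `x`, `1` on the earlier points
      obtain ⟨F, hF0, hF1, -⟩ := exists_continuous_zero_one_of_isClosed
        (isClosed_singleton (x := x)) isClosed_closure
        (Set.disjoint_singleton_left.2 hxZb)
      -- sequence via the key lemma, over the countable family of earlier functions
      haveI : Countable ↥(Set.Iio b) := (myW_countable_Iio b).to_subtype
      obtain ⟨t, ht, htc⟩ := my_key h (fun a : ↥(Set.Iio b) => (g a.1).2.1)
        (fun a => ((ih a.1 a.2).2).1.1)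
        (Cardinal.mk_le_aleph0.trans aleph0_le_continuum) hx
      obtain ⟨z, hz⟩ := my_exists_clusterPt t
      refine ⟨(z, ⇑F, Set.range t), ?_, ?_, ?_⟩
      · exact ⟨Set.range_subset_iff.2 ht, Set.countable_range t,
          my_clusterPt_mem_closure hz fun n => Set.mem_range_self n⟩
      · refine ⟨F.continuous, hF0 rfl, fun a hab => ?_⟩
        exact hF1 (subset_closure ⟨a, hab, rfl⟩)
      · intro a hab
        have hlim := htc ⟨a, hab⟩
        have hfa0 : (g a).2.1 x = 0 := ((ih a hab).2).1.2.1
        rw [hfa0] at hlim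
        exact my_clusterPt_eq_limit hz ((ih a hab).2).1.1 hlim
    have : g b = hex.choose := by rw [hgeq b, hstep]; simp only [dif_pos hex]
    rw [this]
    exact hex.choose_spec
  -- notation for the pieces
  set z : myW.{u} → X := fun b => (g b).1 with hz
  set f : myW.{u} → X → ℝ := fun b => (g b).2.1 with hf
  have hfcont : ∀ b, Continuous (f b) := fun b => ((hspec b).2).1.1
  have hfx : ∀ b, f b x = 0 := fun b => ((hspec b).2).1.2.1
  have hone : ∀ a b, a < b → f b (z a) = 1 := fun a b hab => ((hspec b).2).1.2.2 a hab
  have hzero : ∀ a b, b < a → f b (z a) = 0 := fun a b hba => ((hspec a).2).2 b hba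
  -- a point in the intersection of the tail closures
  set T : myW.{u} → Set X := fun b => z '' Set.Ioi b with hT
  have hTne : ∀ b, (T b).Nonempty := by
    intro b
    obtain ⟨c, hc⟩ := myW_bounded (Set.countable_singleton b)
    exact ⟨z c, c, hc b rfl, rfl⟩
  have hint : (⋂ b, closure (T b)).Nonempty := by
    refine IsCompact.nonempty_iInter_of_directed_nonempty_isCompact_isClosed _
      (fun a b => ⟨max a b, ?_, ?_⟩)
      (fun b => (hTne b).closure)
      (fun b => isClosed_closure.isCompact) (fun b => isClosed_closure)
    · exact closure_mono (Set.image_mono (Set.Ioi_subset_Ioi (le_max_left a b)))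
    · exact closure_mono (Set.image_mono (Set.Ioi_subset_Ioi (le_max_right a b)))
  obtain ⟨xs, hxs⟩ := hint
  have hxsmem : ∀ b, xs ∈ closure (T b) := fun b => Set.mem_iInter.1 hxs b
  -- `f b xs = 0` for every `b`
  have hfxs : ∀ b, f b xs = 0 := by
    intro b
    have himg : f b '' T b ⊆ {0} := by
      rintro _ ⟨_, ⟨a, ha, rfl⟩, rfl⟩
      exact hzero a b ha
    have h1 : f b xs ∈ closure (f b '' T b) :=
      image_closure_subset_closure_image (hfcont b) ⟨xs, hxsmem b, rfl⟩
    exact closure_minimal himg isClosed_singleton h1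
  -- apply the key lemma to the range of `z` and the point `xs`
  have hxsr : xs ∈ closure (Set.range z) := by
    have hb := Classical.arbitrary myW.{u}
    exact closure_mono (by rintro _ ⟨a, _, rfl⟩; exact ⟨a, rfl⟩) (hxsmem hb)
  obtain ⟨t, ht, htc⟩ := my_key h f hfcont myW_card hxsr
  choose a ha using ht
  obtain ⟨bs, hbs⟩ := myW_bounded (Set.countable_range a)
  have hlim := htc bs
  rw [hfxs bs] at hlim
  have hconst : (fun n => f bs (t n)) = fun _ => (1 : ℝ) := by
    funext n
    rw [← ha n]
    exact hone (a n) bs (hbs (a n) ⟨n, rfl⟩)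
  rw [hconst] at hlim
  exact absurd (tendsto_nhds_unique hlim tendsto_const_nhds) (by norm_num)

/-- If every continuous image of the compact Hausdorff space `X` that has a topological
basis of cardinality at most the continuum is Fréchet–Urysohn, then `X` is
Fréchet–Urysohn. -/
theorem stmt_12 (X : Type u) [TopologicalSpace X] [CompactSpace X] [T2Space X]
    (h : ∀ (Y : Type u) [TopologicalSpace Y] [CompactSpace Y] [T2Space Y],
      (∃ f : X → Y, Continuous f ∧ Function.Surjective f) →
      (∃ B : Set (Set Y), TopologicalSpace.IsTopologicalBasis B ∧ #B ≤ Cardinal.continuum) →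
      FrechetUrysohnSpace Y) :
    FrechetUrysohnSpace X := by
  constructor
  intro s x hx
  by_cases hc : ∃ C, C ⊆ s ∧ C.Countable ∧ x ∈ closure C
  · obtain ⟨C, hCs, hCc, hxC⟩ := hc
    obtain ⟨t, ht, htt⟩ := my_case1 h hCc hxC
    exact ⟨t, fun n => hCs (ht n), htt⟩
  · push_neg at hc
    exact absurd (my_case2 h hx fun C hCs hCc => (hc C hCs hCc)) id
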